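/- arXiv:math/0609569 — 3 statements merged into one kernel-verified Lean document; each statement's English description precedes it below -/
import Mathlib

section
/- Let f : M → N be a linear map between inner product spaces of dimension n with singular values 0 ≤ s₁ ≤ ... ≤ s_n. Then the operator norm of the k-th exterior power Λᵏf equals the product s_{n-k+1} ⋯ s_n of the k largest singular values. -/
open Finset Matrix Equiv Function

variable {k n : ℕ}

noncomputable def sortFn (p : Fin k → Fin n) : Fin k → Fin n := by
  classical
  exact if h : Function.Injective p then
    ((Finset.univ.image p).orderEmbOfFin
      (by rw [Finset.card_image_of_injective _ h, Finset.card_univ, Fintype.card_fin]))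
  else p

noncomputable def permOf (p : Fin k → Fin n) : Equiv.Perm (Fin k) := by
  classical
  exact if h : Function.Injective p then
    Equiv.ofBijective
      (fun j => ((Finset.univ.image p).orderIsoOfFin
        (by rw [Finset.card_image_of_injective _ h, Finset.card_univ, Fintype.card_fin])).symm
        ⟨p j, by simp [Finset.mem_image]⟩)
      (by
        rw [← Finite.injective_iff_bijective]
        intro a b hab
        apply h
        have := (OrderIso.injective _) hab
        exact Subtype.ext_iff.mp this)
  else 1

theorem sortFn_strictMono (p : Fin k → Fin n) (hp : Function.Injective p) :
    StrictMono (sortFn p) := by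
  rw [sortFn, dif_pos hp]
  exact (Finset.orderEmbOfFin _ _).strictMono

theorem sortFn_comp_permOf (p : Fin k → Fin n) (hp : Function.Injective p) :
    sortFn p ∘ permOf p = p := by
  funext x
  rw [sortFn, permOf, dif_pos hp, dif_pos hp]
  simp only [Function.comp_apply, Equiv.ofBijective_apply]
  rw [← Finset.coe_orderIsoOfFin_apply]
  simp

theorem sortFn_of_comp (e : Fin k → Fin n) (τ : Equiv.Perm (Fin k)) (he : StrictMono e) :
    sortFn (e ∘ τ) = e := by
  have hinj : Function.Injective (e ∘ τ) := he.injective.comp τ.injective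
  rw [sortFn, dif_pos hinj]
  symm
  apply Finset.orderEmbOfFin_unique _ _ he
  intro x
  simp only [Finset.mem_image, Finset.mem_univ, true_and]
  exact ⟨τ.symm x, by simp⟩

theorem permOf_of_comp (e : Fin k → Fin n) (τ : Equiv.Perm (Fin k)) (he : StrictMono e) :
    permOf (e ∘ τ) = τ := by
  have hinj : Function.Injective (e ∘ τ) := he.injective.comp τ.injective
  have h1 := sortFn_of_comp e τ he
  have h2 := sortFn_comp_permOf _ hinj
  rw [h1] at h2
  ext x
  have := congrFun h2 x
  simp only [Function.comp_apply] at this ⊢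
  exact congrArg Fin.val (he.injective this)
-- Step 1: expansion
theorem det_mul_transpose_expand (B : Matrix (Fin k) (Fin n) ℝ) :
    (B * Bᵀ).det = ∑ p : Fin k → Fin n,
      (B.submatrix id p).det * ∏ i, B i (p i) := by
  calc (B * Bᵀ).det
      = ∑ σ : Perm (Fin k), Perm.sign σ • ∏ i, ∑ l, B (σ i) l * B i l := by
        simp [Matrix.det_apply, Matrix.mul_apply, Matrix.transpose_apply]
    _ = ∑ σ : Perm (Fin k), ∑ p : Fin k → Fin n,
          Perm.sign σ • ∏ i, B (σ i) (p i) * B i (p i) := by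
        simp only [Finset.prod_univ_sum, Fintype.piFinset_univ, Finset.smul_sum]
    _ = ∑ p : Fin k → Fin n, ∑ σ : Perm (Fin k),
          Perm.sign σ • ∏ i, B (σ i) (p i) * B i (p i) := Finset.sum_comm
    _ = ∑ p : Fin k → Fin n, (B.submatrix id p).det * ∏ i, B i (p i) := by
        refine Finset.sum_congr rfl fun p _ => ?_
        rw [Matrix.det_apply, Finset.sum_mul]
        refine Finset.sum_congr rfl fun σ _ => ?_
        rw [Finset.prod_mul_distrib, smul_mul_assoc]
        rfl

theorem det_sq_eq_sum_perm (B : Matrix (Fin k) (Fin n) ℝ) (e : Fin k → Fin n) :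
    (B.submatrix id e).det ^ 2 = ∑ τ : Perm (Fin k),
      (B.submatrix id (e ∘ τ)).det * ∏ i, B i (e (τ i)) := by
  have step : ∀ τ : Perm (Fin k), (B.submatrix id (e ∘ τ)).det * ∏ i, B i (e (τ i))
      = (B.submatrix id e).det * ((Perm.sign τ : ℝ) * ∏ i, (B.submatrix id e)ᵀ (τ i) i) := by
    intro τ
    have h1 : B.submatrix id (e ∘ τ) = (B.submatrix id e).submatrix id τ := rfl
    rw [h1, Matrix.det_permute']
    have h2 : ∀ i, B i (e (τ i)) = (B.submatrix id e)ᵀ (τ i) i := fun i => rfl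
    simp only [h2]
    ring
  rw [Finset.sum_congr rfl (fun τ _ => step τ), ← Finset.mul_sum, ← Matrix.det_apply',
    Matrix.det_transpose, sq]

theorem cauchy_binet_self (B : Matrix (Fin k) (Fin n) ℝ) :
    (B * Bᵀ).det = ∑ e ∈ Finset.univ.filter (fun e : Fin k → Fin n => StrictMono e),
      (B.submatrix id e).det ^ 2 := by
  classical
  rw [det_mul_transpose_expand,
    ← Finset.sum_filter_add_sum_filter_not Finset.univ (fun p : Fin k → Fin n => Function.Injective p)]
  have h2 : ∑ p ∈ Finset.univ.filter (fun p : Fin k → Fin n => ¬ Function.Injective p),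
      (B.submatrix id p).det * ∏ i, B i (p i) = 0 := by
    refine Finset.sum_eq_zero fun p hp => ?_
    replace hp := Finset.mem_filter.mp hp
    simp only [Function.Injective] at hp
    push_neg at hp
    obtain ⟨i, j, hij, hne⟩ := hp.2
    rw [Matrix.det_zero_of_column_eq hne (fun m => by simp [hij]), zero_mul]
  rw [h2, add_zero]
  have hre : ∑ e ∈ Finset.univ.filter (fun e : Fin k → Fin n => StrictMono e),
      (B.submatrix id e).det ^ 2
      = ∑ x ∈ (Finset.univ.filter (fun e : Fin k → Fin n => StrictMono e)) ×ˢ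
          (Finset.univ : Finset (Equiv.Perm (Fin k))),
        (B.submatrix id (x.1 ∘ x.2)).det * ∏ i, B i (x.1 (x.2 i)) := by
    rw [Finset.sum_product]
    exact Finset.sum_congr rfl fun e _ => by
      rw [det_sq_eq_sum_perm B e]
  rw [hre]
  refine Finset.sum_nbij' (i := fun p => (sortFn p, permOf p)) (j := fun x => x.1 ∘ x.2)
    ?_ ?_ ?_ ?_ ?_
  · intro p hp
    simp only [Finset.mem_filter, Finset.mem_univ, true_and] at hp
    simp only [Finset.mem_product, Finset.mem_filter, Finset.mem_univ, true_and]
    exact ⟨sortFn_strictMono p hp, trivial⟩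
  · intro x hx
    simp only [Finset.mem_product, Finset.mem_filter, Finset.mem_univ, true_and] at hx
    simp only [Finset.mem_filter, Finset.mem_univ, true_and]
    exact hx.1.injective.comp x.2.injective
  · intro p hp
    simp only [Finset.mem_filter, Finset.mem_univ, true_and] at hp
    exact sortFn_comp_permOf p hp
  · intro x hx
    simp only [Finset.mem_product, Finset.mem_filter, Finset.mem_univ, true_and] at hx
    exact Prod.ext (sortFn_of_comp x.1 x.2 hx.1) (permOf_of_comp x.1 x.2 hx.1)
  · intro p hp
    simp only [Finset.mem_filter, Finset.mem_univ, true_and] at hp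
    have h := sortFn_comp_permOf p hp
    have h' : ∀ i, sortFn p ((permOf p) i) = p i := fun i => congrFun h i
    simp only [h, h']

theorem strictMono_fin_le {k n : ℕ} (e : Fin k → Fin n) (he : StrictMono e) (j : Fin k) :
    (e j : ℕ) ≤ n - k + j := by
  have step : ∀ d : ℕ, ∀ j : Fin k, ∀ h : (j : ℕ) + d < k,
      (e j : ℕ) + d ≤ (e ⟨(j : ℕ) + d, h⟩ : ℕ) := by
    intro d
    induction d with
    | zero => intro j h; simp
    | succ d ih =>
      intro j h
      have h' : (j : ℕ) + d < k := by omega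
      have h1 := ih j h'
      have h2 : e ⟨(j : ℕ) + d, h'⟩ < e ⟨(j : ℕ) + (d + 1), h⟩ :=
        he (Fin.mk_lt_mk.mpr (by omega))
      rw [Fin.lt_def] at h2
      omega
  have hj : (j : ℕ) < k := j.isLt
  have h := step (k - 1 - (j : ℕ)) j (by omega)
  have := (e ⟨(j : ℕ) + (k - 1 - (j : ℕ)), by omega⟩).isLt
  omega


/-- The operator norm of the k-th exterior power of a linear map `f` between
`n`-dimensional real inner product spaces equals the product of its `k` largest
singular values.  The norm of `Λᵏf` is expressed as the greatest value of
`√ det (⟪f uᵢ, f uⱼ⟫)` over orthonormal `k`-tuples `u`, i.e. the greatest norm of the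
image of a unit simple `k`-vector. -/
theorem width_volume_stmt0 {n k : ℕ} (hk1 : 1 ≤ k) (hkn : k ≤ n)
    {M N : Type*} [NormedAddCommGroup M] [InnerProductSpace ℝ M]
    [NormedAddCommGroup N] [InnerProductSpace ℝ N]
    (hM : Module.finrank ℝ M = n) (hN : Module.finrank ℝ N = n)
    (f : M →ₗ[ℝ] N) (s : Fin n → ℝ) (hs0 : ∀ i, 0 ≤ s i) (hsmono : Monotone s)
    (v : Fin n → M) (w : Fin n → N) (hv : Orthonormal ℝ v) (hw : Orthonormal ℝ w)
    (hsvd : ∀ i, f (v i) = s i • w i) :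
    IsGreatest {x : ℝ | ∃ u : Fin k → M, Orthonormal ℝ u ∧
        x = Real.sqrt (Matrix.det (Matrix.of fun i j : Fin k => (inner ℝ (f (u i)) (f (u j)) : ℝ)))}
      (∏ i ∈ Finset.univ.filter (fun i : Fin n => n - k ≤ (i : ℕ)), s i) := by
  classical
  have hn : 0 < n := lt_of_lt_of_le hk1 hkn
  haveI : FiniteDimensional ℝ M := FiniteDimensional.of_finrank_pos (by omega)
  set P := ∏ i ∈ Finset.univ.filter (fun i : Fin n => n - k ≤ (i : ℕ)), s i with hPdef
  have hι : ∀ j : Fin k, n - k + (j : ℕ) < n := fun j => by have := j.isLt; omega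
  set ι : Fin k → Fin n := fun j => ⟨n - k + j, hι j⟩ with hιdef
  have hιinj : Function.Injective ι := by
    intro a b hab
    simp only [hιdef, Fin.mk.injEq] at hab
    exact Fin.ext (by omega)
  have hP : P = ∏ j : Fin k, s (ι j) := by
    rw [hPdef]
    refine (Finset.prod_nbij ι (fun j _ => ?_) (fun a _ b _ h => hιinj h) (fun i hi => ?_)
      (fun j _ => rfl)).symm
    · simp only [Finset.mem_coe, Finset.mem_filter, Finset.mem_univ, true_and, hιdef]
      omega
    · simp only [Finset.coe_filter, Finset.mem_univ, true_and, Set.mem_setOf_eq] at hi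
      refine ⟨⟨(i : ℕ) - (n - k), by omega⟩, Finset.mem_coe.mpr (Finset.mem_univ _), ?_⟩
      simp only [hιdef]
      exact Fin.ext (by simp; omega)
  have hP0 : 0 ≤ P := by
    rw [hP]; exact Finset.prod_nonneg fun j _ => hs0 _
  constructor
  · -- membership
    refine ⟨fun j => v (ι j), hv.comp ι hιinj, ?_⟩
    have hGram : (Matrix.of fun i j : Fin k => (inner ℝ (f (v (ι i))) (f (v (ι j))) : ℝ))
        = Matrix.diagonal (fun j => s (ι j) ^ 2) := by
      ext i j
      have horth := orthonormal_iff_ite.mp hw (ι i) (ι j)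
      simp only [Matrix.of_apply, hsvd, real_inner_smul_left, real_inner_smul_right,
        Matrix.diagonal_apply, horth]
      by_cases h : i = j
      · subst h; simp [sq]
      · have : ι i ≠ ι j := fun hc => h (hιinj hc)
        simp [h, this]
    rw [hGram, Matrix.det_diagonal]
    have : ∏ j : Fin k, s (ι j) ^ 2 = (∏ j : Fin k, s (ι j)) ^ 2 := by
      rw [Finset.prod_pow]
    rw [this, Real.sqrt_sq (by rw [← hP]; exact hP0), hP]
  · -- upper bound
    rintro x ⟨u, hu, rfl⟩
    haveI : Nonempty (Fin n) := ⟨⟨0, hn⟩⟩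
    have hcard : Fintype.card (Fin n) = Module.finrank ℝ M := by simp [hM]
    have hspan : ⊤ ≤ Submodule.span ℝ (Set.range v) :=
      (hv.linearIndependent.span_eq_top_of_card_eq_finrank hcard).ge
    let b : OrthonormalBasis (Fin n) ℝ M := OrthonormalBasis.mk hv hspan
    have hb : ∀ i, b i = v i := fun i => by simp [b]
    set A : Matrix (Fin k) (Fin n) ℝ := Matrix.of fun i l => (inner ℝ (v l) (u i) : ℝ) with hAdef
    have hexp : ∀ i, u i = ∑ l, A i l • v l := by
      intro i
      conv_lhs => rw [← b.sum_repr' (u i)]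
      exact Finset.sum_congr rfl fun l _ => by rw [hb, hAdef]; rfl
    have hfu : ∀ i, f (u i) = ∑ l, (A i l * s l) • w l := by
      intro i
      rw [hexp i, map_sum]
      exact Finset.sum_congr rfl fun l _ => by
        rw [LinearMap.map_smul, hsvd, smul_smul]
    set B : Matrix (Fin k) (Fin n) ℝ := Matrix.of fun i l => A i l * s l with hBdef
    have hG : (Matrix.of fun i j : Fin k => (inner ℝ (f (u i)) (f (u j)) : ℝ)) = B * Bᵀ := by
      ext i j
      rw [Matrix.mul_apply]
      simp only [Matrix.of_apply, Matrix.transpose_apply, hfu]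
      rw [hw.inner_sum]
      simp [hBdef]
    have hAAt : A * Aᵀ = 1 := by
      ext i j
      rw [Matrix.mul_apply, Matrix.one_apply]
      have h1 : (inner ℝ (u i) (u j) : ℝ) = ∑ l, A i l * A j l := by
        rw [hexp i, hexp j, hv.inner_sum]
        simp
      have h2 := orthonormal_iff_ite.mp hu i j
      simp only [Matrix.transpose_apply]
      rw [← h1, h2]
    rw [hG, cauchy_binet_self]
    have hsub : ∀ e : Fin k → Fin n,
        B.submatrix id e = (A.submatrix id e) * Matrix.diagonal (fun j => s (e j)) := by
      intro e
      ext i j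
      rw [Matrix.mul_diagonal]
      simp [hBdef]
    have key : ∀ e ∈ Finset.univ.filter (fun e : Fin k → Fin n => StrictMono e),
        ((B.submatrix id e).det) ^ 2 ≤ ((A.submatrix id e).det) ^ 2 * P ^ 2 := by
      intro e he
      simp only [Finset.mem_filter, Finset.mem_univ, true_and] at he
      rw [hsub, Matrix.det_mul, Matrix.det_diagonal, mul_pow]
      refine mul_le_mul_of_nonneg_left ?_ (sq_nonneg _)
      have h1 : ∏ j : Fin k, s (e j) ≤ P := by
        rw [hP]
        refine Finset.prod_le_prod (fun j _ => hs0 _) (fun j _ => ?_)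
        refine hsmono ?_
        rw [Fin.le_def]
        simpa [hιdef] using strictMono_fin_le e he j
      have h0 : 0 ≤ ∏ j : Fin k, s (e j) := Finset.prod_nonneg fun j _ => hs0 _
      exact pow_le_pow_left₀ h0 h1 2
    calc Real.sqrt (∑ e ∈ Finset.univ.filter (fun e : Fin k → Fin n => StrictMono e),
          ((B.submatrix id e).det) ^ 2)
        ≤ Real.sqrt (∑ e ∈ Finset.univ.filter (fun e : Fin k → Fin n => StrictMono e),
          ((A.submatrix id e).det) ^ 2 * P ^ 2) :=
          Real.sqrt_le_sqrt (Finset.sum_le_sum key)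
      _ = Real.sqrt ((A * Aᵀ).det * P ^ 2) := by
          rw [← Finset.sum_mul, ← cauchy_binet_self]
      _ = P := by rw [hAAt, Matrix.det_one, one_mul, Real.sqrt_sq hP0]
end

section
/- Let n ≥ 2 and let R, S be n-dimensional rectangles with side lengths R₁ ≤ ... ≤ R_n and S₁ ≤ ... ≤ S_n. If L : ℝⁿ → ℝⁿ is a linear diffeomorphism mapping R onto S, then L maps each hyperface of R onto a hyperface of S, and the (n−1)-dilation of L (the product of the n−1 largest singular values of L) is at least the ratio (area of image face)/(area of face) for every hyperface of R. -/
open MeasureTheory Matrix NNReal ENNReal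


lemma aux_norm_sq {N : ℕ} {u : Fin N → EuclideanSpace ℝ (Fin N)} (hu : Orthonormal ℝ u)
    (c : Fin N → ℝ) : ‖∑ m, c m • u m‖ ^ 2 = ∑ m, (c m) ^ 2 := by
  rw [← real_inner_self_eq_norm_sq]
  rw [hu.inner_sum c c Finset.univ]
  simp [sq]

lemma aux_lower {K : ℕ} (L : EuclideanSpace ℝ (Fin (K + 1)) ≃ₗ[ℝ] EuclideanSpace ℝ (Fin (K + 1)))
    (s : Fin (K + 1) → ℝ) (hs0 : ∀ i, 0 ≤ s i) (hsmono : Monotone s)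
    (v w : Fin (K + 1) → EuclideanSpace ℝ (Fin (K + 1))) (hv : Orthonormal ℝ v)
    (hw : Orthonormal ℝ w)
    (hsvd : ∀ i, L (v i) = s i • w i) (x : EuclideanSpace ℝ (Fin (K + 1))) :
    s 0 * ‖x‖ ≤ ‖L x‖ := by
  have hb : Fintype.card (Fin (K + 1)) = Module.finrank ℝ (EuclideanSpace ℝ (Fin (K + 1))) := by
    simp [finrank_euclideanSpace_fin]
  let b : Module.Basis (Fin (K + 1)) ℝ (EuclideanSpace ℝ (Fin (K + 1))) :=
    basisOfOrthonormalOfCardEqFinrank hv hb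
  have hbv : ∀ m, b m = v m := fun m => by
    simp [b, coe_basisOfOrthonormalOfCardEqFinrank]
  set c : Fin (K + 1) → ℝ := fun m => b.repr x m with hc
  have hx : x = ∑ m, c m • v m := by
    conv_lhs => rw [← b.sum_repr x]
    exact Finset.sum_congr rfl fun m _ => by rw [hbv]
  have hLx : L x = ∑ m, (c m * s m) • w m := by
    rw [hx, map_sum]
    exact Finset.sum_congr rfl fun m _ => by
      rw [LinearEquiv.map_smul, hsvd m, smul_smul]
  have h1 : ‖x‖ ^ 2 = ∑ m, (c m) ^ 2 := by rw [hx]; exact aux_norm_sq hv c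
  have h2 : ‖L x‖ ^ 2 = ∑ m, (c m * s m) ^ 2 := by rw [hLx]; exact aux_norm_sq hw _
  have key : (s 0 * ‖x‖) ^ 2 ≤ ‖L x‖ ^ 2 := by
    rw [h2, mul_pow, h1, Finset.mul_sum]
    refine Finset.sum_le_sum fun m _ => ?_
    have hm : s 0 ≤ s m := hsmono (Fin.zero_le m)
    calc s 0 ^ 2 * c m ^ 2 ≤ s m ^ 2 * c m ^ 2 := by
          apply mul_le_mul_of_nonneg_right _ (sq_nonneg _)
          exact pow_le_pow_left₀ (hs0 0) hm 2
      _ = (c m * s m) ^ 2 := by ring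
  have hnn : 0 ≤ s 0 * ‖x‖ := mul_nonneg (hs0 0) (norm_nonneg _)
  exact le_of_pow_le_pow_left₀ two_ne_zero (norm_nonneg _) key

lemma aux_box_volume {N : ℕ} (g : Fin N → ℝ) (hg : ∀ m, 0 ≤ g m) :
    volume {x : EuclideanSpace ℝ (Fin N) | ∀ m, x m ∈ Set.Icc 0 (g m)} =
      ENNReal.ofReal (∏ m, g m) := by
  have hpre : {x : EuclideanSpace ℝ (Fin N) | ∀ m, x m ∈ Set.Icc 0 (g m)} =
      (MeasurableEquiv.toLp 2 (Fin N → ℝ)).symm ⁻¹' (Set.pi Set.univ fun m => Set.Icc 0 (g m)) := by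
    ext x
    rw [Set.mem_preimage, Set.mem_univ_pi]
    rfl
  rw [hpre, (EuclideanSpace.volume_preserving_symm_measurableEquiv_toLp (Fin N)).measure_preimage
    (MeasurableSet.univ_pi fun m => measurableSet_Icc).nullMeasurableSet]
  rw [volume_pi_pi]
  simp_rw [Real.volume_Icc, sub_zero]
  rw [← ENNReal.ofReal_prod_of_nonneg (fun m _ => hg m)]

lemma aux_expand {N : ℕ} (T : EuclideanSpace ℝ (Fin N) →ₗ[ℝ] EuclideanSpace ℝ (Fin N))
    (x : EuclideanSpace ℝ (Fin N)) (a : Fin N) :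
    T x a = ∑ m, x m * T (EuclideanSpace.single m 1) a := by
  have hx : x = ∑ m, x m • EuclideanSpace.single m (1 : ℝ) := by
    have := (EuclideanSpace.basisFun (Fin N) ℝ).toBasis.sum_repr x
    simpa [EuclideanSpace.basisFun_apply] using this.symm
  conv_lhs => rw [hx]
  rw [map_sum]
  rw [show (∑ m, T (x m • EuclideanSpace.single m (1:ℝ))) a
      = ∑ m, (T (x m • EuclideanSpace.single m (1:ℝ))) a from by
    rw [WithLp.ofLp_sum, Finset.sum_apply]]
  exact Finset.sum_congr rfl fun m _ => by
    rw [_root_.map_smul]; rfl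

lemma aux_orth_det {N : ℕ} (u : Fin N → EuclideanSpace ℝ (Fin N)) (hu : Orthonormal ℝ u)
    (M : Matrix (Fin N) (Fin N) ℝ) (hM : ∀ a c, M a c = u c a) : |M.det| = 1 := by
  have h1 : Mᵀ * M = 1 := by
    ext a c
    rw [Matrix.mul_apply]
    have he : ∑ m, Mᵀ a m * M m c = ∑ m, u a m * u c m := by
      refine Finset.sum_congr rfl fun m _ => by rw [Matrix.transpose_apply, hM, hM]
    rw [he]
    have hi := (orthonormal_iff_ite.mp hu) a c
    rw [PiLp.inner_apply] at hi
    simpa [Matrix.one_apply, mul_comm] using hi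
  have hdet : M.det ^ 2 = 1 := by
    have := congrArg Matrix.det h1
    rwa [Matrix.det_mul, Matrix.det_transpose, Matrix.det_one, ← sq] at this
  rcases sq_eq_one_iff.mp hdet with h | h
  all_goals simp [h]

lemma aux_det {N : ℕ} (L : EuclideanSpace ℝ (Fin N) ≃ₗ[ℝ] EuclideanSpace ℝ (Fin N))
    (s : Fin N → ℝ) (hs0 : ∀ i, 0 ≤ s i)
    (v w : Fin N → EuclideanSpace ℝ (Fin N)) (hv : Orthonormal ℝ v) (hw : Orthonormal ℝ w)
    (hsvd : ∀ i, L (v i) = s i • w i) :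
    |LinearMap.det (L : EuclideanSpace ℝ (Fin N) →ₗ[ℝ] EuclideanSpace ℝ (Fin N))| = ∏ m, s m := by
  classical
  set b := (EuclideanSpace.basisFun (Fin N) ℝ).toBasis with hb
  set A := LinearMap.toMatrix b b (L : EuclideanSpace ℝ (Fin N) →ₗ[ℝ] EuclideanSpace ℝ (Fin N))
    with hA
  have hAentry : ∀ a m, A a m = L (EuclideanSpace.single m 1) a := by
    intro a m
    rw [hA, LinearMap.toMatrix_apply]
    simp [hb, EuclideanSpace.basisFun_apply]
  set Mv : Matrix (Fin N) (Fin N) ℝ := Matrix.of fun a c => v c a with hMv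
  set Mw : Matrix (Fin N) (Fin N) ℝ := Matrix.of fun a c => w c a with hMw
  have hmat : A * Mv = Mw * Matrix.diagonal s := by
    ext a c
    rw [Matrix.mul_apply, Matrix.mul_diagonal]
    have h1 : ∑ m, A a m * Mv m c = ∑ m, (v c) m * L (EuclideanSpace.single m 1) a := by
      refine Finset.sum_congr rfl fun m _ => by rw [hAentry]; simp [hMv]; ring
    have h4 : ∑ m, (v c) m * L (EuclideanSpace.single m 1) a = L (v c) a :=
      (aux_expand (L : EuclideanSpace ℝ (Fin N) →ₗ[ℝ] EuclideanSpace ℝ (Fin N)) (v c) a).symm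
    rw [h1, h4]
    have h2 : L (v c) a = (s c • w c) a := by rw [← hsvd c]
    rw [h2]
    simp [hMw, PiLp.smul_apply, smul_eq_mul]
    ring
  have hdets := congrArg Matrix.det hmat
  rw [Matrix.det_mul, Matrix.det_mul, Matrix.det_diagonal] at hdets
  have habs := congrArg abs hdets
  rw [abs_mul, abs_mul, aux_orth_det v hv Mv (fun a c => rfl),
    aux_orth_det w hw Mw (fun a c => rfl), mul_one, one_mul,
    abs_of_nonneg (Finset.prod_nonneg fun m _ => hs0 m)] at habs
  rw [← LinearMap.det_toMatrix b, ← hA]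
  exact habs

lemma aux_face {N : ℕ} (Rs Ss : Fin N → ℝ) (hRpos : ∀ i, 0 < Rs i) (hSpos : ∀ i, 0 < Ss i)
    (L : EuclideanSpace ℝ (Fin N) ≃ₗ[ℝ] EuclideanSpace ℝ (Fin N))
    (hL : L '' {x : EuclideanSpace ℝ (Fin N) | ∀ i, x i ∈ Set.Icc 0 (Rs i)} =
        {x : EuclideanSpace ℝ (Fin N) | ∀ i, x i ∈ Set.Icc 0 (Ss i)})
    (i : Fin N) :
    ∃ j : Fin N,
      (L '' {x : EuclideanSpace ℝ (Fin N) | (∀ m, x m ∈ Set.Icc 0 (Rs m)) ∧ x i = 0} =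
        {x : EuclideanSpace ℝ (Fin N) | (∀ m, x m ∈ Set.Icc 0 (Ss m)) ∧ x j = 0}) ∧
      (L '' {x : EuclideanSpace ℝ (Fin N) | (∀ m, x m ∈ Set.Icc 0 (Rs m)) ∧ x i = Rs i} =
        {x : EuclideanSpace ℝ (Fin N) | (∀ m, x m ∈ Set.Icc 0 (Ss m)) ∧ x j = Ss j}) := by
  classical
  set R : Set (EuclideanSpace ℝ (Fin N)) := {x | ∀ m, x m ∈ Set.Icc 0 (Rs m)} with hR
  set S : Set (EuclideanSpace ℝ (Fin N)) := {x | ∀ m, x m ∈ Set.Icc 0 (Ss m)} with hS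
  set c : Fin N → ℝ := fun m => L.symm (EuclideanSpace.single m 1) i with hc
  have hφ : ∀ y : EuclideanSpace ℝ (Fin N), L.symm y i = ∑ m, y m * c m := by
    intro y
    exact aux_expand (L.symm : EuclideanSpace ℝ (Fin N) →ₗ[ℝ] EuclideanSpace ℝ (Fin N)) y i
  have hmemS : ∀ y ∈ S, ∀ m, 0 ≤ y m ∧ y m ≤ Ss m := fun y hy m => hy m
  have hrange : ∀ y ∈ S, 0 ≤ L.symm y i ∧ L.symm y i ≤ Rs i := by
    intro y hy
    rw [← hL] at hy
    obtain ⟨x, hx, rfl⟩ := hy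
    rw [L.symm_apply_apply]
    exact hx i
  -- construct points of E from plain functions
  let mk : (Fin N → ℝ) → EuclideanSpace ℝ (Fin N) := fun f => (WithLp.equiv 2 (Fin N → ℝ)).symm f
  have hmk : ∀ f a, mk f a = f a := fun f a => rfl
  have hc_nonneg : ∀ m, 0 ≤ c m := by
    by_contra hneg
    push_neg at hneg
    obtain ⟨m₀, hm₀⟩ := hneg
    have hyS : mk (fun m => if c m < 0 then Ss m else 0) ∈ S := by
      intro m
      rw [hmk]
      dsimp only
      split
      · exact ⟨le_of_lt (hSpos m), le_refl _⟩
      · exact ⟨le_refl _, le_of_lt (hSpos m)⟩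
    have h0 : (0:ℝ) ≤ L.symm (mk (fun m => if c m < 0 then Ss m else 0)) i := (hrange _ hyS).1
    rw [hφ _] at h0
    have hlt : ∑ m, (mk (fun m => if c m < 0 then Ss m else 0)) m * c m < 0 := by
      have : ∑ m, (mk (fun m => if c m < 0 then Ss m else 0)) m * c m < ∑ m : Fin N, (0:ℝ) := by
        apply Finset.sum_lt_sum
        · intro m _
          rw [hmk]
          dsimp only
          split
          · rename_i h; exact le_of_lt (mul_neg_of_pos_of_neg (hSpos m) h)
          · simp
        · refine ⟨m₀, Finset.mem_univ m₀, ?_⟩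
          rw [hmk]
          simp only [if_pos hm₀]
          exact mul_neg_of_pos_of_neg (hSpos m₀) hm₀
      simpa using this
    linarith
  have hsum : ∑ m, Ss m * c m = Rs i := by
    have hle : ∑ m, Ss m * c m ≤ Rs i := by
      have hyS : mk (fun m => Ss m) ∈ S := by
        intro m; rw [hmk]; exact ⟨le_of_lt (hSpos m), le_refl _⟩
      have := (hrange _ hyS).2
      rw [hφ] at this
      simpa [hmk] using this
    have hge : Rs i ≤ ∑ m, Ss m * c m := by
      have hxR : mk (fun m => if m = i then Rs i else 0) ∈ R := by
        intro m; rw [hmk]; dsimp only; split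
        · exact ⟨le_of_lt (hRpos i), by rename_i h; rw [h]⟩
        · exact ⟨le_refl _, le_of_lt (hRpos m)⟩
      have hyS : L (mk (fun m => if m = i then Rs i else 0)) ∈ S := by
        rw [← hL]; exact Set.mem_image_of_mem _ hxR
      have hval : L.symm (L (mk (fun m => if m = i then Rs i else 0))) i = Rs i := by
        rw [L.symm_apply_apply, hmk]; simp
      rw [hφ] at hval
      rw [← hval]
      apply Finset.sum_le_sum
      intro m _
      exact mul_le_mul_of_nonneg_right ((hmemS _ hyS m).2) (hc_nonneg m)
    linarith
  obtain ⟨j, hj⟩ : ∃ j, 0 < c j := by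
    by_contra hno
    push_neg at hno
    have : ∀ m, c m = 0 := fun m => le_antisymm (hno m) (hc_nonneg m)
    rw [Finset.sum_eq_zero (fun m _ => by rw [this m, mul_zero])] at hsum
    exact absurd hsum.symm (ne_of_gt (hRpos i))
  have himg : ∀ e : ℝ, L '' {x : EuclideanSpace ℝ (Fin N) | (∀ m, x m ∈ Set.Icc 0 (Rs m)) ∧ x i = e} =
      {y : EuclideanSpace ℝ (Fin N) | (∀ m, y m ∈ Set.Icc 0 (Ss m)) ∧ L.symm y i = e} := by
    intro e
    ext y
    constructor
    · rintro ⟨x, ⟨hx, hxi⟩, rfl⟩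
      refine ⟨?_, by rw [L.symm_apply_apply]; exact hxi⟩
      have : L x ∈ S := by rw [← hL]; exact Set.mem_image_of_mem _ hx
      exact this
    · rintro ⟨hyS, hyi⟩
      have hymem : y ∈ S := hyS
      rw [← hL] at hymem
      obtain ⟨x, hx, rfl⟩ := hymem
      rw [L.symm_apply_apply] at hyi
      exact ⟨x, ⟨hx, hyi⟩, rfl⟩
  have htop : ∀ y ∈ S, L.symm y i = Rs i → ∀ m, c m ≠ 0 → y m = Ss m := by
    intro y hyS hyv m hm
    rw [hφ] at hyv
    have hterm : ∀ k ∈ Finset.univ, y k * c k ≤ Ss k * c k := fun k _ =>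
      mul_le_mul_of_nonneg_right ((hmemS y hyS k).2) (hc_nonneg k)
    have heq := (Finset.sum_eq_sum_iff_of_le hterm).mp (by rw [hyv, hsum]) m (Finset.mem_univ m)
    exact mul_right_cancel₀ hm heq
  have hbot : ∀ y ∈ S, L.symm y i = 0 → ∀ m, c m ≠ 0 → y m = 0 := by
    intro y hyS hyv m hm
    rw [hφ] at hyv
    have hterm : ∀ k ∈ Finset.univ, (0:ℝ) ≤ y k * c k := fun k _ =>
      mul_nonneg (hmemS y hyS k).1 (hc_nonneg k)
    have h0 := (Finset.sum_eq_zero_iff_of_nonneg hterm).mp hyv m (Finset.mem_univ m)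
    rcases mul_eq_zero.mp h0 with h | h
    · exact h
    · exact absurd h hm
  have huniq : ∀ k, k ≠ j → c k = 0 := by
    intro k hkj
    by_contra hk
    have hcj : c j ≠ 0 := ne_of_gt hj
    -- coordinates j and k of L (single m 1) vanish for m ≠ i
    have hzero : ∀ a : Fin N, c a ≠ 0 → ∀ m, m ≠ i → L (EuclideanSpace.single m 1) a = 0 := by
      intro a ha m hmi
      have hq : mk (fun b => if b = i then Rs i else 0) ∈
          {x : EuclideanSpace ℝ (Fin N) | (∀ b, x b ∈ Set.Icc 0 (Rs b)) ∧ x i = Rs i} := by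
        constructor
        · intro b; rw [hmk]; dsimp only; split
          · exact ⟨le_of_lt (hRpos i), by rename_i h; rw [h]⟩
          · exact ⟨le_refl _, le_of_lt (hRpos b)⟩
        · rw [hmk]; simp
      let p : EuclideanSpace ℝ (Fin N) :=
        mk (fun b => if b = i then Rs i else 0) + Rs m • EuclideanSpace.single m 1
      have hpcoord : ∀ b, p b = (if b = i then Rs i else 0) + Rs m * (if b = m then 1 else 0) := by
        intro b
        show ((mk (fun b => if b = i then Rs i else 0) + Rs m • EuclideanSpace.single m 1 :
          EuclideanSpace ℝ (Fin N))) b = _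
        rw [PiLp.add_apply, PiLp.smul_apply, hmk, EuclideanSpace.single_apply, smul_eq_mul]
      have hp : p ∈
          {x : EuclideanSpace ℝ (Fin N) | (∀ b, x b ∈ Set.Icc 0 (Rs b)) ∧ x i = Rs i} := by
        constructor
        · intro b
          rw [hpcoord]
          by_cases hbi : b = i
          · subst hbi
            rw [if_pos rfl, if_neg (fun h => hmi h.symm)]
            simp only [mul_zero, add_zero, Set.mem_Icc]
            exact ⟨le_of_lt (hRpos b), le_refl _⟩
          · rw [if_neg hbi]
            by_cases hbm : b = m
            · subst hbm
              rw [if_pos rfl]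
              simp only [mul_one, zero_add, Set.mem_Icc]
              exact ⟨le_of_lt (hRpos b), le_refl _⟩
            · rw [if_neg hbm]
              simp only [mul_zero, add_zero, Set.mem_Icc]
              exact ⟨le_refl _, le_of_lt (hRpos b)⟩
        · rw [hpcoord]
          rw [if_pos rfl, if_neg (fun h => hmi h.symm)]
          ring
      have hLq := Set.mem_image_of_mem L hq
      have hLp := Set.mem_image_of_mem L hp
      rw [himg (Rs i)] at hLq hLp
      have hq' := htop _ hLq.1 hLq.2 a ha
      have hp' := htop _ hLp.1 hLp.2 a ha
      have hadd : L p a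
          = L (mk (fun b => if b = i then Rs i else 0)) a
            + Rs m * L (EuclideanSpace.single m 1) a := by
        show L ((mk (fun b => if b = i then Rs i else 0) + Rs m • EuclideanSpace.single m 1 :
          EuclideanSpace ℝ (Fin N))) a = _
        rw [map_add, LinearEquiv.map_smul, PiLp.add_apply, PiLp.smul_apply, smul_eq_mul]
      rw [hadd, hq'] at hp'
      have : Rs m * L (EuclideanSpace.single m 1) a = 0 := by linarith
      rcases mul_eq_zero.mp this with h | h
      · exact absurd h (ne_of_gt (hRpos m))
      · exact h
    have hexp : ∀ (x : EuclideanSpace ℝ (Fin N)) (a : Fin N), c a ≠ 0 → L x a = x i * L (EuclideanSpace.single i 1) a := by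
      intro x a ha
      have := aux_expand (L : EuclideanSpace ℝ (Fin N) →ₗ[ℝ] EuclideanSpace ℝ (Fin N)) x a
      rw [show (L : EuclideanSpace ℝ (Fin N) →ₗ[ℝ] EuclideanSpace ℝ (Fin N)) x a = L x a from rfl] at this
      rw [this]
      refine Finset.sum_eq_single i (fun m _ hmi => ?_) (fun h => absurd (Finset.mem_univ i) h)
      rw [show (L : EuclideanSpace ℝ (Fin N) →ₗ[ℝ] EuclideanSpace ℝ (Fin N)) (EuclideanSpace.single m 1) a = L (EuclideanSpace.single m 1) a
        from rfl, hzero a ha m hmi, mul_zero]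
    have hu1 : (1:ℝ) = L.symm (EuclideanSpace.single j 1) i * L (EuclideanSpace.single i 1) j := by
      have := hexp (L.symm (EuclideanSpace.single j 1)) j hcj
      rw [L.apply_symm_apply, EuclideanSpace.single_apply, if_pos rfl] at this
      exact this
    have hu2 : (0:ℝ) = L.symm (EuclideanSpace.single j 1) i * L (EuclideanSpace.single i 1) k := by
      have := hexp (L.symm (EuclideanSpace.single j 1)) k hk
      rw [L.apply_symm_apply, EuclideanSpace.single_apply, if_neg hkj] at this
      exact this
    have hui : L.symm (EuclideanSpace.single j 1) i ≠ 0 := by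
      intro h; rw [h, zero_mul] at hu1; exact one_ne_zero hu1
    have hak : L (EuclideanSpace.single i 1) k = 0 := by
      rcases mul_eq_zero.mp hu2.symm with h | h
      · exact absurd h hui
      · exact h
    have hv1 : (1:ℝ) = L.symm (EuclideanSpace.single k 1) i * L (EuclideanSpace.single i 1) k := by
      have := hexp (L.symm (EuclideanSpace.single k 1)) k hk
      rw [L.apply_symm_apply, EuclideanSpace.single_apply, if_pos rfl] at this
      exact this
    rw [hak, mul_zero] at hv1
    exact one_ne_zero hv1
  have hφj : ∀ y : EuclideanSpace ℝ (Fin N), L.symm y i = y j * c j := by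
    intro y
    rw [hφ]
    exact Finset.sum_eq_single j (fun m _ hm => by rw [huniq m hm, mul_zero])
      (fun h => absurd (Finset.mem_univ j) h)
  have hsumj : Ss j * c j = Rs i := by
    rw [← hsum]
    symm
    exact Finset.sum_eq_single j (fun m _ hm => by rw [huniq m hm, mul_zero])
      (fun h => absurd (Finset.mem_univ j) h)
  refine ⟨j, ?_, ?_⟩
  · rw [himg 0]
    ext y
    simp only [Set.mem_setOf_eq]
    constructor
    · rintro ⟨hyS, hyv⟩
      exact ⟨hyS, hbot y hyS hyv j (ne_of_gt hj)⟩
    · rintro ⟨hyS, hyj⟩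
      exact ⟨hyS, by rw [hφj, hyj, zero_mul]⟩
  · rw [himg (Rs i)]
    ext y
    simp only [Set.mem_setOf_eq]
    constructor
    · rintro ⟨hyS, hyv⟩
      exact ⟨hyS, htop y hyS hyv j (ne_of_gt hj)⟩
    · rintro ⟨hyS, hyj⟩
      exact ⟨hyS, by rw [hφj, hyj, hsumj]⟩

lemma aux_face_measure {K : ℕ} (g : Fin (K + 2) → ℝ) (i : Fin (K + 2)) (e : ℝ)
    (he : e ∈ Set.Icc 0 (g i)) :
    μH[(((K + 1 : ℕ)) : ℝ)]
        {x : EuclideanSpace ℝ (Fin (K + 2)) | (∀ m, x m ∈ Set.Icc 0 (g m)) ∧ x i = e} =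
      μH[(((K + 1 : ℕ)) : ℝ)]
        {z : EuclideanSpace ℝ (Fin (K + 1)) | ∀ m, z m ∈ Set.Icc 0 (g (i.succAbove m))} := by
  classical
  let f : EuclideanSpace ℝ (Fin (K + 1)) → EuclideanSpace ℝ (Fin (K + 2)) := fun z =>
    (WithLp.equiv 2 (Fin (K + 2) → ℝ)).symm (i.insertNth e ((WithLp.equiv 2 (Fin (K + 1) → ℝ)) z))
  have hfcoord : ∀ z a, f z a =
      (i.insertNth e ((WithLp.equiv 2 (Fin (K + 1) → ℝ)) z) : Fin (K + 2) → ℝ) a :=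
    fun z a => rfl
  have hzcoord : ∀ (z : EuclideanSpace ℝ (Fin (K + 1))) m,
      ((WithLp.equiv 2 (Fin (K + 1) → ℝ)) z) m = z m := fun z m => rfl
  have hiso : Isometry f := by
    apply Isometry.of_dist_eq
    intro z z'
    rw [EuclideanSpace.dist_eq, EuclideanSpace.dist_eq]
    congr 1
    rw [Fin.sum_univ_succAbove (fun a => dist (f z a) (f z' a) ^ 2) i]
    have h1 : dist (f z i) (f z' i) ^ 2 = 0 := by
      rw [hfcoord, hfcoord, Fin.insertNth_apply_same, Fin.insertNth_apply_same]
      simp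
    rw [h1, zero_add]
    refine Finset.sum_congr rfl fun m _ => ?_
    rw [hfcoord, hfcoord, Fin.insertNth_apply_succAbove, Fin.insertNth_apply_succAbove]
    rfl
  have himage : f '' {z : EuclideanSpace ℝ (Fin (K + 1)) |
        ∀ m, z m ∈ Set.Icc 0 (g (i.succAbove m))} =
      {x : EuclideanSpace ℝ (Fin (K + 2)) | (∀ m, x m ∈ Set.Icc 0 (g m)) ∧ x i = e} := by
    ext x
    constructor
    · rintro ⟨z, hz, rfl⟩
      refine ⟨?_, by rw [hfcoord, Fin.insertNth_apply_same]⟩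
      intro a
      by_cases hai : a = i
      · subst hai
        rw [hfcoord, Fin.insertNth_apply_same]
        exact he
      · obtain ⟨m, rfl⟩ := Fin.exists_succAbove_eq hai
        rw [hfcoord, Fin.insertNth_apply_succAbove]
        exact hz m
    · rintro ⟨hx, hxi⟩
      refine ⟨(WithLp.equiv 2 (Fin (K + 1) → ℝ)).symm (fun m => x (i.succAbove m)),
        fun m => hx (i.succAbove m), ?_⟩
      apply PiLp.ext
      intro a
      by_cases hai : a = i
      · subst hai
        rw [hfcoord, Fin.insertNth_apply_same]
        exact hxi.symm
      · obtain ⟨m, rfl⟩ := Fin.exists_succAbove_eq hai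
        rw [hfcoord, Fin.insertNth_apply_succAbove]
        rfl
  rw [← himage]
  exact hiso.hausdorffMeasure_image (Or.inl (by positivity)) _

lemma aux_hausdorff_smul (K : ℕ) : ∃ c : ℝ≥0,
    (μH[((K + 1 : ℕ) : ℝ)] : Measure (EuclideanSpace ℝ (Fin (K + 1)))) =
      c • (volume : Measure (EuclideanSpace ℝ (Fin (K + 1)))) := by
  have h : ((K + 1 : ℕ) : ℝ) =
      ((Module.finrank ℝ (EuclideanSpace ℝ (Fin (K + 1))) : ℕ) : ℝ) := by
    simp [finrank_euclideanSpace_fin]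
  rw [h]
  exact ⟨_, Measure.isAddLeftInvariant_eq_smul _ _⟩

/-- A linear diffeomorphism `L` taking the rectangle `R = ∏ [0, Rᵢ]` onto `S = ∏ [0, Sᵢ]`
maps each hyperface of `R` onto a hyperface of `S`, and its `(n-1)`-dilation (the product
`s₂ ⋯ s_n` of its `n-1` largest singular values, given here by an SVD of `L`) is at least
the ratio of the `(n-1)`-dimensional area of the image face to that of the face. -/
theorem width_volume_stmt7 {n : ℕ} (hn : 2 ≤ n)
    (Rs Ss : Fin n → ℝ) (hRpos : ∀ i, 0 < Rs i) (hSpos : ∀ i, 0 < Ss i)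
    (hRmono : Monotone Rs) (hSmono : Monotone Ss)
    (L : EuclideanSpace ℝ (Fin n) ≃ₗ[ℝ] EuclideanSpace ℝ (Fin n))
    (hL : L '' {x : EuclideanSpace ℝ (Fin n) | ∀ i, x i ∈ Set.Icc 0 (Rs i)} =
        {x : EuclideanSpace ℝ (Fin n) | ∀ i, x i ∈ Set.Icc 0 (Ss i)})
    (s : Fin n → ℝ) (hs0 : ∀ i, 0 ≤ s i) (hsmono : Monotone s)
    (v w : Fin n → EuclideanSpace ℝ (Fin n)) (hv : Orthonormal ℝ v) (hw : Orthonormal ℝ w)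
    (hsvd : ∀ i, L (v i) = s i • w i) :
    ∀ i : Fin n, ∀ e ∈ ({0, Rs i} : Set ℝ),
      (∃ j : Fin n, ∃ e' ∈ ({0, Ss j} : Set ℝ),
        L '' {x : EuclideanSpace ℝ (Fin n) | (∀ m, x m ∈ Set.Icc 0 (Rs m)) ∧ x i = e} =
          {x : EuclideanSpace ℝ (Fin n) | (∀ m, x m ∈ Set.Icc 0 (Ss m)) ∧ x j = e'}) ∧
      μH[(n : ℝ) - 1]
          (L '' {x : EuclideanSpace ℝ (Fin n) | (∀ m, x m ∈ Set.Icc 0 (Rs m)) ∧ x i = e}) ≤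
        ENNReal.ofReal (∏ j ∈ Finset.univ.filter (fun j : Fin n => 1 ≤ (j : ℕ)), s j) *
          μH[(n : ℝ) - 1]
            {x : EuclideanSpace ℝ (Fin n) | (∀ m, x m ∈ Set.Icc 0 (Rs m)) ∧ x i = e} := by
  obtain ⟨K, rfl⟩ : ∃ K, n = K + 2 := ⟨n - 2, by omega⟩
  intro i e he
  obtain ⟨j, hj0, hjR⟩ := aux_face Rs Ss hRpos hSpos L hL i
  -- determinant identity
  have hdet : |LinearMap.det
      (L : EuclideanSpace ℝ (Fin (K + 2)) →ₗ[ℝ] EuclideanSpace ℝ (Fin (K + 2)))| = ∏ m, s m :=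
    aux_det L s hs0 v w hv hw hsvd
  have hsnn : (0:ℝ) ≤ ∏ m, s m := Finset.prod_nonneg fun m _ => hs0 m
  have hRnn : (0:ℝ) ≤ ∏ m, Rs m := Finset.prod_nonneg fun m _ => (hRpos m).le
  -- volume identity : (∏ s) * (∏ Rs) = ∏ Ss
  have hprod_eq : (∏ m, s m) * ∏ m, Rs m = ∏ m, Ss m := by
    have himg : (volume : Measure (EuclideanSpace ℝ (Fin (K + 2))))
        (L '' {x : EuclideanSpace ℝ (Fin (K + 2)) | ∀ m, x m ∈ Set.Icc 0 (Rs m)}) =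
        ENNReal.ofReal |LinearMap.det
          (L : EuclideanSpace ℝ (Fin (K + 2)) →ₗ[ℝ] EuclideanSpace ℝ (Fin (K + 2)))| *
        volume {x : EuclideanSpace ℝ (Fin (K + 2)) | ∀ m, x m ∈ Set.Icc 0 (Rs m)} :=
      Measure.addHaar_image_linearMap volume _ _
    rw [hL, hdet, aux_box_volume Rs (fun m => (hRpos m).le),
      aux_box_volume Ss (fun m => (hSpos m).le), ← ENNReal.ofReal_mul hsnn] at himg
    exact ((ENNReal.ofReal_eq_ofReal_iff
      (Finset.prod_nonneg fun m _ => (hSpos m).le) (mul_nonneg hsnn hRnn)).mp himg).symm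
  -- positivity of the smallest singular value
  have hs0pos : 0 < s 0 := by
    rcases lt_or_eq_of_le (hs0 0) with h | h
    · exact h
    · exfalso
      have h1 : L (v 0) = 0 := by rw [hsvd 0, ← h, zero_smul]
      have h2 : v 0 = 0 := by
        have := congrArg L.symm h1
        rwa [L.symm_apply_apply, map_zero] at this
      exact hv.ne_zero 0 h2
  -- s 0 * Rs i ≤ Ss j
  have hSj : s 0 * Rs i ≤ Ss j := by
    have hy1 : EuclideanSpace.single j (Ss j) ∈
        {x : EuclideanSpace ℝ (Fin (K + 2)) | (∀ m, x m ∈ Set.Icc 0 (Ss m)) ∧ x j = Ss j} := by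
      constructor
      · intro m
        rw [EuclideanSpace.single_apply]
        split
        · exact ⟨(hSpos j).le, by rename_i hh; rw [hh]⟩
        · exact ⟨le_refl _, (hSpos m).le⟩
      · rw [EuclideanSpace.single_apply, if_pos rfl]
    rw [← hjR] at hy1
    obtain ⟨x1, ⟨hx1, hx1i⟩, hLx1⟩ := hy1
    have hnormy : ‖EuclideanSpace.single j (Ss j)‖ = Ss j := by
      rw [EuclideanSpace.norm_single, Real.norm_eq_abs, abs_of_pos (hSpos j)]
    have hcoord : Rs i ≤ ‖x1‖ := by
      have hip : (inner ℝ (EuclideanSpace.single i (1:ℝ)) x1 : ℝ) = x1 i := by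
        rw [EuclideanSpace.inner_single_left]
        simp
      have habs := abs_real_inner_le_norm (EuclideanSpace.single i (1:ℝ)) x1
      rw [hip, EuclideanSpace.norm_single, Real.norm_eq_abs, abs_one, one_mul] at habs
      calc Rs i = |x1 i| := by rw [hx1i, abs_of_pos (hRpos i)]
        _ ≤ ‖x1‖ := habs
    calc s 0 * Rs i ≤ s 0 * ‖x1‖ := mul_le_mul_of_nonneg_left hcoord (hs0 0)
      _ ≤ ‖L x1‖ := aux_lower (K := K + 1) L s hs0 hsmono v w hv hw hsvd x1
      _ = Ss j := by rw [hLx1, hnormy]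
  -- the reduced singular-value product
  have hfilter : Finset.univ.filter (fun m : Fin (K + 2) => 1 ≤ (m : ℕ)) =
      Finset.univ.erase 0 := by
    ext m
    simp only [Finset.mem_filter, Finset.mem_univ, true_and, Finset.mem_erase, ne_eq, and_true, Fin.ext_iff, Fin.val_zero]; omega
  have hPs : s 0 * ∏ m ∈ Finset.univ.filter (fun m : Fin (K + 2) => 1 ≤ (m : ℕ)), s m
      = ∏ m, s m := by
    rw [hfilter]
    exact Finset.mul_prod_erase _ _ (Finset.mem_univ 0)
  set P : ℝ := ∏ m ∈ Finset.univ.filter (fun m : Fin (K + 2) => 1 ≤ (m : ℕ)), s m with hP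
  have hPnn : 0 ≤ P := Finset.prod_nonneg fun m _ => hs0 m
  have hRprod : (∏ m : Fin (K + 1), Rs (i.succAbove m)) * Rs i = ∏ m, Rs m := by
    rw [Fin.prod_univ_succAbove (fun m => Rs m) i]
    ring
  have hSprod : (∏ m : Fin (K + 1), Ss (j.succAbove m)) * Ss j = ∏ m, Ss m := by
    rw [Fin.prod_univ_succAbove (fun m => Ss m) j]
    ring
  have hBnn : (0:ℝ) ≤ ∏ m : Fin (K + 1), Rs (i.succAbove m) :=
    Finset.prod_nonneg fun m _ => (hRpos _).le
  have hAnn : (0:ℝ) ≤ ∏ m : Fin (K + 1), Ss (j.succAbove m) :=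
    Finset.prod_nonneg fun m _ => (hSpos _).le
  -- the key real inequality
  have hkey : (∏ m : Fin (K + 1), Ss (j.succAbove m)) ≤
      P * ∏ m : Fin (K + 1), Rs (i.succAbove m) := by
    have h1 : (∏ m : Fin (K + 1), Ss (j.succAbove m)) * (s 0 * Rs i) ≤
        (P * ∏ m : Fin (K + 1), Rs (i.succAbove m)) * (s 0 * Rs i) := by
      calc (∏ m : Fin (K + 1), Ss (j.succAbove m)) * (s 0 * Rs i)
          ≤ (∏ m : Fin (K + 1), Ss (j.succAbove m)) * Ss j :=
            mul_le_mul_of_nonneg_left hSj hAnn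
        _ = ∏ m, Ss m := hSprod
        _ = (∏ m, s m) * ∏ m, Rs m := hprod_eq.symm
        _ = (s 0 * P) * ((∏ m : Fin (K + 1), Rs (i.succAbove m)) * Rs i) := by
            rw [hPs, hRprod]
        _ = (P * ∏ m : Fin (K + 1), Rs (i.succAbove m)) * (s 0 * Rs i) := by ring
    exact le_of_mul_le_mul_right h1 (mul_pos hs0pos (hRpos i))
  -- measure computations
  obtain ⟨c, hcmeas⟩ := aux_hausdorff_smul K
  rw [show ((K + 2 : ℕ) : ℝ) - 1 = ((K + 1 : ℕ) : ℝ) from by push_cast; ring]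
  have hkey2 : ∀ (e₀ e₀' : ℝ), e₀ ∈ Set.Icc 0 (Rs i) → e₀' ∈ Set.Icc 0 (Ss j) →
      (L '' {x : EuclideanSpace ℝ (Fin (K + 2)) | (∀ m, x m ∈ Set.Icc 0 (Rs m)) ∧ x i = e₀} =
        {x : EuclideanSpace ℝ (Fin (K + 2)) | (∀ m, x m ∈ Set.Icc 0 (Ss m)) ∧ x j = e₀'}) →
      μH[((K + 1 : ℕ) : ℝ)]
          (L '' {x : EuclideanSpace ℝ (Fin (K + 2)) |
            (∀ m, x m ∈ Set.Icc 0 (Rs m)) ∧ x i = e₀}) ≤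
        ENNReal.ofReal P *
          μH[((K + 1 : ℕ) : ℝ)] {x : EuclideanSpace ℝ (Fin (K + 2)) |
            (∀ m, x m ∈ Set.Icc 0 (Rs m)) ∧ x i = e₀} := by
    intro e₀ e₀' h1 h2 heq
    rw [heq, aux_face_measure Ss j e₀' h2, aux_face_measure Rs i e₀ h1, hcmeas]
    simp only [Measure.smul_apply, smul_eq_mul]
    rw [aux_box_volume _ (fun m => (hSpos _).le), aux_box_volume _ (fun m => (hRpos _).le)]
    calc (c : ℝ≥0∞) * ENNReal.ofReal (∏ m : Fin (K + 1), Ss (j.succAbove m))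
        ≤ (c : ℝ≥0∞) * (ENNReal.ofReal P *
            ENNReal.ofReal (∏ m : Fin (K + 1), Rs (i.succAbove m))) := by
          apply mul_le_mul_right
          rw [← ENNReal.ofReal_mul hPnn]
          exact ENNReal.ofReal_le_ofReal hkey
      _ = ENNReal.ofReal P *
            ((c : ℝ≥0∞) * ENNReal.ofReal (∏ m : Fin (K + 1), Rs (i.succAbove m))) := by
          ring
  rcases he with rfl | he
  · exact ⟨⟨j, 0, Set.mem_insert _ _, hj0⟩,
      hkey2 0 0 ⟨le_refl _, (hRpos i).le⟩ ⟨le_refl _, (hSpos j).le⟩ hj0⟩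
  · rw [Set.mem_singleton_iff] at he
    subst he
    exact ⟨⟨j, Ss j, Set.mem_insert_iff.2 (Or.inr rfl), hjR⟩,
      hkey2 (Rs i) (Ss j) ⟨(hRpos i).le, le_refl _⟩ ⟨(hSpos j).le, le_refl _⟩ hjR⟩
end

section
/- Let ε ∈ (0,1), n ≥ 3. Let R be the n-dimensional rectangle with sides R₁ = ⋯ = R_{n−2} = ε and R_{n−1} = R_n = 1, and let S be the rectangle with sides S₁ = ⋯ = S_{n−1} = ε and S_n = ε^{−1}. Then every linear diffeomorphism from R onto S has (n−1)-dilation at least ε^{−1}. -/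
local notation "Euc" n => EuclideanSpace ℝ (Fin n)

private lemma euc_decomp {n : ℕ} (x : EuclideanSpace ℝ (Fin n)) :
    x = ∑ j, x j • EuclideanSpace.single j (1:ℝ) := by
  have h := Module.Basis.sum_repr (EuclideanSpace.basisFun (Fin n) ℝ).toBasis x
  simp only [OrthonormalBasis.coe_toBasis_repr_apply, EuclideanSpace.basisFun_repr,
    OrthonormalBasis.coe_toBasis, EuclideanSpace.basisFun_apply] at h
  exact h.symm

private lemma card_filter_val_lt {n m : ℕ} (h : m < n) :
    (Finset.univ.filter (fun i : Fin n => (i:ℕ) < m)).card = m := by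
  have : (Finset.univ.filter (fun i : Fin n => (i:ℕ) < m)) = Finset.Iio (⟨m, h⟩ : Fin n) := by
    ext j; simp [Finset.mem_Iio, Fin.lt_def]
  rw [this, Fin.card_Iio]

/-- A linear equivalence mapping one coordinate box onto another is a scaled
permutation of coordinates. -/
private lemma box_monomial {n : ℕ} (Rs Ss : Fin n → ℝ)
    (hRpos : ∀ i, 0 < Rs i) (hSpos : ∀ i, 0 < Ss i)
    (L : EuclideanSpace ℝ (Fin n) ≃ₗ[ℝ] EuclideanSpace ℝ (Fin n))
    (hL : L '' {x : EuclideanSpace ℝ (Fin n) | ∀ i, x i ∈ Set.Icc 0 (Rs i)} =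
        {x : EuclideanSpace ℝ (Fin n) | ∀ i, x i ∈ Set.Icc 0 (Ss i)}) :
    ∃ σf : Fin n → Fin n, Function.Injective σf ∧
      ∀ i, (L (EuclideanSpace.single i (1:ℝ)) = (L (EuclideanSpace.single i (1:ℝ)) (σf i)) •
              EuclideanSpace.single (σf i) (1:ℝ)) ∧
           0 < L (EuclideanSpace.single i (1:ℝ)) (σf i) ∧
           Rs i * L (EuclideanSpace.single i (1:ℝ)) (σf i) = Ss (σf i) := by
  classical
  set E : Fin n → EuclideanSpace ℝ (Fin n) := fun i => EuclideanSpace.single i (1:ℝ) with hE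
  have hEapp : ∀ i k : Fin n, E i k = if k = i then 1 else 0 := by
    intro i k; simp [hE, EuclideanSpace.single_apply]
  have memS : ∀ x : EuclideanSpace ℝ (Fin n), (∀ i, x i ∈ Set.Icc 0 (Rs i)) →
      ∀ i, (L x) i ∈ Set.Icc 0 (Ss i) := by
    intro x hx
    have : L x ∈ {x : EuclideanSpace ℝ (Fin n) | ∀ i, x i ∈ Set.Icc 0 (Ss i)} := by
      rw [← hL]; exact ⟨x, hx, rfl⟩
    exact this
  have memR : ∀ y : EuclideanSpace ℝ (Fin n), (∀ i, y i ∈ Set.Icc 0 (Ss i)) →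
      ∀ i, (L.symm y) i ∈ Set.Icc 0 (Rs i) := by
    intro y hy
    have : y ∈ L '' {x : EuclideanSpace ℝ (Fin n) | ∀ i, x i ∈ Set.Icc 0 (Rs i)} := by
      rw [hL]; exact hy
    obtain ⟨x, hx, hxy⟩ := this
    have : L.symm y = x := by rw [← hxy]; exact L.symm_apply_apply x
    rw [this]; exact hx
  -- the matrix entries
  set A : Fin n → Fin n → ℝ := fun j i => L (E i) j with hA
  set B : Fin n → Fin n → ℝ := fun i j => L.symm (E j) i with hB
  have memRE : ∀ i : Fin n, ∀ k, (Rs i • E i) k ∈ Set.Icc 0 (Rs k) := by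
    intro i k
    have : (Rs i • E i) k = Rs i * (if k = i then 1 else 0) := by
      simp [hEapp, EuclideanSpace.single_apply]
    rw [this]
    by_cases h : k = i <;> simp [h, (hRpos i).le, (hRpos k).le]
  have memSE : ∀ j : Fin n, ∀ k, (Ss j • E j) k ∈ Set.Icc 0 (Ss k) := by
    intro j k
    have : (Ss j • E j) k = Ss j * (if k = j then 1 else 0) := by
      simp [hEapp, EuclideanSpace.single_apply]
    rw [this]
    by_cases h : k = j <;> simp [h, (hSpos j).le, (hSpos k).le]
  have hA0 : ∀ j i, 0 ≤ A j i := by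
    intro j i
    have h1 := memS _ (memRE i) j
    have h2 : (L (Rs i • E i)) j = Rs i * A j i := by
      rw [map_smul]; simp [hA]
    rw [h2] at h1
    exact nonneg_of_mul_nonneg_right h1.1 (hRpos i)
  have hB0 : ∀ i j, 0 ≤ B i j := by
    intro i j
    have h1 := memR _ (memSE j) i
    have h2 : (L.symm (Ss j • E j)) i = Ss j * B i j := by
      rw [map_smul]; simp [hB]
    rw [h2] at h1
    exact nonneg_of_mul_nonneg_right h1.1 (hSpos j)
  -- coordinate congruence helper
  have euc_congr : ∀ {x y : EuclideanSpace ℝ (Fin n)}, x = y → ∀ k, x k = y k := by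
    intro x y h k; rw [h]
  -- decomposition of L (E i)
  have hLEdec : ∀ i, L (E i) = ∑ j, A j i • E j := by
    intro i
    have := euc_decomp (L (E i))
    simpa [hA] using this
  have hsymmdec : ∀ j, L.symm (E j) = ∑ k, B k j • E k := by
    intro j
    have := euc_decomp (L.symm (E j))
    simpa [hB] using this
  -- composition identity
  have hBA : ∀ i k : Fin n, ∑ j, A j i * B k j = if k = i then 1 else 0 := by
    intro i k
    have h1 : L.symm (L (E i)) = E i := L.symm_apply_apply _
    have h2 : L.symm (L (E i)) = ∑ j, A j i • L.symm (E j) := by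
      rw [hLEdec i, map_sum]; simp
    have h3 : (∑ j, A j i • L.symm (E j)) k = ∑ j, A j i * B k j := by
      rw [WithLp.ofLp_sum, Finset.sum_apply]
      refine Finset.sum_congr rfl fun j _ => ?_
      simp [hB]
    rw [h1] at h2
    rw [← hEapp i k, euc_congr h2 k, h3]
  -- each term vanishes off-diagonal
  have hterm0 : ∀ i k : Fin n, k ≠ i → ∀ j, A j i * B k j = 0 := by
    intro i k hk j
    have hsum := hBA i k
    rw [if_neg hk] at hsum
    have hnn : ∀ j ∈ Finset.univ, 0 ≤ A j i * B k j :=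
      fun j _ => mul_nonneg (hA0 j i) (hB0 k j)
    exact (Finset.sum_eq_zero_iff_of_nonneg hnn).mp hsum j (Finset.mem_univ j)
  -- if A j i ≠ 0 then L.symm (E j) is supported at i
  have hsupp : ∀ i j : Fin n, A j i ≠ 0 → L.symm (E j) = B i j • E i := by
    intro i j hji
    ext k
    by_cases hk : k = i
    · subst hk; simp [hB, hEapp]
    · have := hterm0 i k hk j
      have hBkj : B k j = 0 := by
        rcases mul_eq_zero.mp this with h | h
        · exact absurd h hji
        · exact h
      have h4 : (B i j • E i) k = 0 := by simp [hEapp, hk]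
      rw [h4, ← hBkj]
  -- column of A has at most one nonzero entry
  have huniq : ∀ i j j' : Fin n, A j i ≠ 0 → A j' i ≠ 0 → j = j' := by
    intro i j j' hj hj'
    by_contra hne
    have h1 := hsupp i j hj
    have h2 := hsupp i j' hj'
    have hkey : L.symm (B i j' • E j - B i j • E j') = 0 := by
      rw [map_sub, map_smul, map_smul, h1, h2, smul_smul, smul_smul,
        mul_comm (B i j) (B i j'), sub_self]
    have h0 : B i j' • E j - B i j • E j' = 0 :=
      L.symm.injective (by rw [hkey, map_zero])
    have hBij' : B i j' = 0 := by
      have := euc_congr h0 j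
      simpa [hEapp, hne, Ne.symm hne] using this
    have hz : L.symm (E j') = 0 := by rw [h2, hBij', zero_smul]
    have hEj' : E j' = 0 := L.symm.injective (by rw [hz, map_zero])
    have := euc_congr hEj' j'
    simp [hEapp] at this
  -- every column is nonzero somewhere
  have hcolnz : ∀ i : Fin n, ∃ j, A j i ≠ 0 := by
    intro i
    by_contra h
    push_neg at h
    have : L (E i) = 0 := by
      rw [hLEdec i]
      refine Finset.sum_eq_zero fun j _ => by rw [h j, zero_smul]
    have hEi : E i = 0 := L.injective (by rw [this, map_zero])
    have := euc_congr hEi i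
    simp [hEapp] at this
  choose σf hσf using hcolnz
  have hApos : ∀ i, 0 < A (σf i) i := fun i => lt_of_le_of_ne (hA0 _ _) (Ne.symm (hσf i))
  have hcol : ∀ i j, j ≠ σf i → A j i = 0 := by
    intro i j hj
    by_contra h
    exact hj (huniq i j (σf i) h (hσf i))
  have hLE : ∀ i, L (E i) = A (σf i) i • E (σf i) := by
    intro i
    rw [hLEdec i]
    rw [Finset.sum_eq_single (σf i)]
    · intro j _ hj; rw [hcol i j hj, zero_smul]
    · intro h; exact absurd (Finset.mem_univ _) h
  have hinj : Function.Injective σf := by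
    intro i i' h
    by_contra hne
    have h1 : L ((A (σf i') i') • E i - (A (σf i) i) • E i') = 0 := by
      rw [map_sub, map_smul, map_smul, hLE i, hLE i', h, smul_smul, smul_smul,
        mul_comm (A (σf i') i) (A (σf i') i'), sub_self]
    have h0 : (A (σf i') i') • E i - (A (σf i) i) • E i' = 0 :=
      L.injective (by rw [h1, map_zero])
    have hco := euc_congr h0 i
    have hz : A (σf i') i' = 0 := by
      simpa [PiLp.sub_apply, PiLp.smul_apply, hEapp, hne, smul_eq_mul] using hco
    exact (hApos i').ne' hz
  -- the scalar relation
  have hsymmE : ∀ i, L.symm (E (σf i)) = (A (σf i) i)⁻¹ • E i := by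
    intro i
    have h1 : L.symm (L (E i)) = E i := L.symm_apply_apply _
    rw [hLE i, map_smul] at h1
    rw [eq_inv_smul_iff₀ (hApos i).ne']
    exact h1
  have hceq : ∀ i, Rs i * A (σf i) i = Ss (σf i) := by
    intro i
    have hle : Rs i * A (σf i) i ≤ Ss (σf i) := by
      have h1 := memS _ (memRE i) (σf i)
      have h2 : (L (Rs i • E i)) (σf i) = Rs i * A (σf i) i := by
        rw [map_smul, hLE i]
        have : ((Rs i • A (σf i) i • E (σf i)) : EuclideanSpace ℝ (Fin n)) (σf i)
            = Rs i * (A (σf i) i * (E (σf i)) (σf i)) := rfl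
        rw [this, hEapp]
        simp
      rw [h2] at h1
      exact h1.2
    have hge : Ss (σf i) ≤ Rs i * A (σf i) i := by
      have h1 := memR _ (memSE (σf i)) i
      have h2 : (L.symm (Ss (σf i) • E (σf i))) i = Ss (σf i) * (A (σf i) i)⁻¹ := by
        rw [map_smul, hsymmE i]
        have : ((Ss (σf i) • (A (σf i) i)⁻¹ • E i) : EuclideanSpace ℝ (Fin n)) i
            = Ss (σf i) * ((A (σf i) i)⁻¹ * (E i) i) := rfl
        rw [this, hEapp]
        simp
      rw [h2] at h1
      have h3 := h1.2
      have h4 := mul_le_mul_of_nonneg_right h3 (hApos i).le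
      rwa [mul_assoc, inv_mul_cancel₀ (hApos i).ne', mul_one] at h4
    exact le_antisymm hle hge
  exact ⟨σf, hinj, fun i => ⟨hLE i, hApos i, hceq i⟩⟩

/-- The absolute determinant of a map with an SVD is the product of the singular values. -/
private lemma abs_det_eq_prod_svd {n : ℕ} (hn : 0 < n)
    (L : EuclideanSpace ℝ (Fin n) ≃ₗ[ℝ] EuclideanSpace ℝ (Fin n))
    (s : Fin n → ℝ) (hs0 : ∀ i, 0 ≤ s i)
    (v w : Fin n → EuclideanSpace ℝ (Fin n)) (hv : Orthonormal ℝ v) (hw : Orthonormal ℝ w)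
    (hsvd : ∀ i, L (v i) = s i • w i) :
    |LinearMap.det (L : EuclideanSpace ℝ (Fin n) →ₗ[ℝ] EuclideanSpace ℝ (Fin n))| = ∏ i, s i := by
  classical
  haveI : Nonempty (Fin n) := ⟨⟨0, hn⟩⟩
  have cardeq : Fintype.card (Fin n) = Module.finrank ℝ (EuclideanSpace ℝ (Fin n)) := by
    simp [finrank_euclideanSpace_fin]
  set Bv := basisOfOrthonormalOfCardEqFinrank hv cardeq with hBvdef
  set Bw := basisOfOrthonormalOfCardEqFinrank hw cardeq with hBwdef
  have hBv : ⇑Bv = v := coe_basisOfOrthonormalOfCardEqFinrank hv cardeq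
  have hBw : ⇑Bw = w := coe_basisOfOrthonormalOfCardEqFinrank hw cardeq
  have hdiag : LinearMap.toMatrix Bv Bw (L : EuclideanSpace ℝ (Fin n) →ₗ[ℝ] _)
      = Matrix.diagonal s := by
    ext i j
    rw [LinearMap.toMatrix_apply]
    have hvj : Bv j = v j := by rw [hBv]
    have : (L : EuclideanSpace ℝ (Fin n) →ₗ[ℝ] _) (Bv j) = s j • w j := by
      rw [hvj, ← hsvd j]; rfl
    rw [this, map_smul]
    have hwj : (s j • Bw.repr (w j)) i = s j * (Bw.repr (w j)) i := rfl
    rw [hwj, ← hBw, Module.Basis.repr_self]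
    by_cases h : i = j
    · subst h; simp [Matrix.diagonal_apply_eq]
    · simp [Matrix.diagonal_apply_ne _ h, Finsupp.single_apply, Ne.symm h]
  have hcomp : LinearMap.toMatrix Bv Bv (L : EuclideanSpace ℝ (Fin n) →ₗ[ℝ] _)
      = LinearMap.toMatrix Bw Bv (LinearMap.id) * Matrix.diagonal s := by
    rw [← hdiag, ← LinearMap.toMatrix_comp, LinearMap.id_comp]
  have hdet : LinearMap.det (L : EuclideanSpace ℝ (Fin n) →ₗ[ℝ] _)
      = Bv.det ⇑Bw * ∏ i, s i := by
    rw [← LinearMap.det_toMatrix Bv, hcomp, Matrix.det_mul, Matrix.det_diagonal,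
      LinearMap.toMatrix_id_eq_basis_toMatrix, Module.Basis.det_apply]
  have hv' : Orthonormal ℝ ⇑Bv := by rw [hBv]; exact hv
  have hw' : Orthonormal ℝ ⇑Bw := by rw [hBw]; exact hw
  have hpm : Bv.det ⇑Bw = 1 ∨ Bv.det ⇑Bw = -1 := by
    have h := OrthonormalBasis.det_to_matrix_orthonormalBasis_real
      (Bv.toOrthonormalBasis hv') (Bw.toOrthonormalBasis hw')
    rwa [Module.Basis.toBasis_toOrthonormalBasis, Module.Basis.coe_toOrthonormalBasis] at h
  have hprodnn : 0 ≤ ∏ i, s i := Finset.prod_nonneg fun i _ => hs0 i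
  rcases hpm with h | h <;> rw [hdet, h] <;>
    simp [abs_of_nonneg hprodnn]

/-- The absolute determinant of a scaled coordinate permutation. -/
private lemma abs_det_monomial {n : ℕ} (L : EuclideanSpace ℝ (Fin n) ≃ₗ[ℝ] EuclideanSpace ℝ (Fin n))
    (σe : Equiv.Perm (Fin n)) (c : Fin n → ℝ) (hc : ∀ i, 0 ≤ c i)
    (hLE : ∀ i, L (EuclideanSpace.single i (1:ℝ)) = c i • EuclideanSpace.single (σe i) (1:ℝ)) :
    |LinearMap.det (L : EuclideanSpace ℝ (Fin n) →ₗ[ℝ] EuclideanSpace ℝ (Fin n))| = ∏ i, c i := by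
  classical
  set B0 := (EuclideanSpace.basisFun (Fin n) ℝ).toBasis with hB0
  set N := LinearMap.toMatrix B0 B0 (L : EuclideanSpace ℝ (Fin n) →ₗ[ℝ] _) with hNdef
  have hN : ∀ j i, N j i = L (EuclideanSpace.single i (1:ℝ)) j := by
    intro j i
    rw [hNdef, LinearMap.toMatrix_apply, hB0]
    rw [OrthonormalBasis.coe_toBasis_repr_apply, EuclideanSpace.basisFun_repr,
      OrthonormalBasis.coe_toBasis, EuclideanSpace.basisFun_apply]
    rfl
  have hsub : N.submatrix σe id = Matrix.diagonal c := by
    ext p i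
    rw [Matrix.submatrix_apply, id_eq, hN, hLE i]
    have happ : (c i • EuclideanSpace.single (σe i) (1:ℝ)) (σe p)
        = c i * (if σe p = σe i then 1 else 0) := by
      simp [EuclideanSpace.single_apply]
    rw [happ]
    by_cases h : p = i
    · subst h; simp [Matrix.diagonal_apply_eq]
    · have : ¬ (σe p = σe i) := fun hh => h (σe.injective hh)
      simp [Matrix.diagonal_apply_ne _ h, this]
  have hperm := Matrix.det_permute σe N
  rw [hsub, Matrix.det_diagonal] at hperm
  have hdetN : Matrix.det N = LinearMap.det (L : EuclideanSpace ℝ (Fin n) →ₗ[ℝ] _) :=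
    LinearMap.det_toMatrix B0 _
  have hprodnn : 0 ≤ ∏ i, c i := Finset.prod_nonneg fun i _ => hc i
  rcases Int.units_eq_one_or (Equiv.Perm.sign σe) with h | h <;>
    rw [h] at hperm <;> simp only [Units.val_one, Units.val_neg, Int.cast_one, Int.cast_neg,
      one_mul, neg_mul, neg_one_mul] at hperm <;>
    rw [← hdetN]
  · rw [← hperm]; exact abs_of_nonneg hprodnn
  · rw [hperm]
    rw [hperm] at hprodnn
    exact abs_of_nonpos (by linarith)
/-- For `R` with sides `ε, …, ε, 1, 1` and `S` with sides `ε, …, ε, ε⁻¹` in dimension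
`n ≥ 3`, every linear diffeomorphism taking `R` onto `S` has `(n-1)`-dilation (the
product of its `n-1` largest singular values, given here by an SVD) at least `ε⁻¹`. -/
theorem width_volume_stmt8 {n : ℕ} (hn : 3 ≤ n) (ε : ℝ) (hε : ε ∈ Set.Ioo (0:ℝ) 1)
    (Rs Ss : Fin n → ℝ)
    (hRs : ∀ i : Fin n, Rs i = if (i : ℕ) < n - 2 then ε else 1)
    (hSs : ∀ i : Fin n, Ss i = if (i : ℕ) < n - 1 then ε else ε⁻¹)
    (L : EuclideanSpace ℝ (Fin n) ≃ₗ[ℝ] EuclideanSpace ℝ (Fin n))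
    (hL : L '' {x : EuclideanSpace ℝ (Fin n) | ∀ i, x i ∈ Set.Icc 0 (Rs i)} =
        {x : EuclideanSpace ℝ (Fin n) | ∀ i, x i ∈ Set.Icc 0 (Ss i)})
    (s : Fin n → ℝ) (hs0 : ∀ i, 0 ≤ s i) (hsmono : Monotone s)
    (v w : Fin n → EuclideanSpace ℝ (Fin n)) (hv : Orthonormal ℝ v) (hw : Orthonormal ℝ w)
    (hsvd : ∀ i, L (v i) = s i • w i) :
    ε⁻¹ ≤ ∏ j ∈ Finset.univ.filter (fun j : Fin n => 1 ≤ (j : ℕ)), s j := by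
  classical
  obtain ⟨hε0, hε1⟩ := hε
  have hRpos : ∀ i, 0 < Rs i := by
    intro i; rw [hRs i]; split <;> [exact hε0; exact one_pos]
  have hSpos : ∀ i, 0 < Ss i := by
    intro i; rw [hSs i]; split <;> [exact hε0; exact inv_pos.mpr hε0]
  obtain ⟨σf, hinj, hm⟩ := box_monomial Rs Ss hRpos hSpos L hL
  set c : Fin n → ℝ := fun i => L (EuclideanSpace.single i (1:ℝ)) (σf i) with hcdef
  have hLE : ∀ i, L (EuclideanSpace.single i (1:ℝ)) = c i • EuclideanSpace.single (σf i) (1:ℝ) :=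
    fun i => (hm i).1
  have hcpos : ∀ i, 0 < c i := fun i => (hm i).2.1
  have hceq : ∀ i, Rs i * c i = Ss (σf i) := fun i => (hm i).2.2
  set σe : Equiv.Perm (Fin n) := Equiv.ofBijective σf (Finite.injective_iff_bijective.mp hinj)
    with hσe
  have hσeapp : ∀ i, σe i = σf i := fun i => rfl
  -- volumes of the two boxes agree
  have h2n : n - 2 < n := by omega
  have h1n : n - 1 < n := by omega
  have hprodR : ∏ i, Rs i = ε ^ (n - 2) := by
    rw [Finset.prod_congr rfl fun i _ => hRs i, Finset.prod_ite, Finset.prod_const,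
      Finset.prod_const, one_pow, mul_one, card_filter_val_lt h2n]
  have hprodS : ∏ i, Ss i = ε ^ (n - 2) := by
    rw [Finset.prod_congr rfl fun i _ => hSs i, Finset.prod_ite, Finset.prod_const,
      Finset.prod_const, card_filter_val_lt h1n]
    have hcard : (Finset.univ.filter (fun i : Fin n => ¬ ((i:ℕ) < n - 1))).card = 1 := by
      have h := Finset.card_filter_add_card_filter_not
        (s := (Finset.univ : Finset (Fin n))) (p := fun i : Fin n => (i:ℕ) < n - 1)
      rw [card_filter_val_lt h1n, Finset.card_univ, Fintype.card_fin] at h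
      omega
    rw [hcard, pow_one]
    have hn1 : n - 1 = (n - 2) + 1 := by omega
    rw [hn1, pow_succ, mul_assoc, mul_inv_cancel₀ hε0.ne', mul_one]
  have hprodc : ∏ i, c i = 1 := by
    have h1 : ∏ i, (Rs i * c i) = ∏ i, Ss (σe i) :=
      Finset.prod_congr rfl fun i _ => by rw [hceq i, hσeapp]
    rw [Finset.prod_mul_distrib, Equiv.prod_comp σe Ss, hprodR, hprodS] at h1
    have hne : (ε : ℝ) ^ (n - 2) ≠ 0 := pow_ne_zero _ hε0.ne'
    field_simp at h1
    exact h1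
  -- an index with singular direction stretched by exactly ε
  set i₁ : Fin n := ⟨n - 2, h2n⟩ with hi₁
  set i₂ : Fin n := ⟨n - 1, h1n⟩ with hi₂
  set jl : Fin n := ⟨n - 1, h1n⟩ with hjl
  have hne12 : i₁ ≠ i₂ := by
    intro hcon
    have hval : (i₁ : ℕ) = (i₂ : ℕ) := congrArg Fin.val hcon
    have e1 : (i₁ : ℕ) = n - 2 := rfl
    have e2 : (i₂ : ℕ) = n - 1 := rfl
    omega
  have hnejl : σf i₁ ≠ jl ∨ σf i₂ ≠ jl := by
    by_contra h
    push_neg at h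
    exact hne12 (hinj (h.1.trans h.2.symm))
  obtain ⟨i₀, hi₀val, hi₀jl⟩ : ∃ i₀ : Fin n, ¬ ((i₀ : ℕ) < n - 2) ∧ σf i₀ ≠ jl := by
    rcases hnejl with h | h
    · refine ⟨i₁, ?_, h⟩
      have hval : (i₁ : ℕ) = n - 2 := rfl
      omega
    · refine ⟨i₂, ?_, h⟩
      have hval : (i₂ : ℕ) = n - 1 := rfl
      omega
  have hRi₀ : Rs i₀ = 1 := by rw [hRs i₀, if_neg hi₀val]
  have hSi₀ : Ss (σf i₀) = ε := by
    rw [hSs (σf i₀), if_pos]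
    have h1 : (σf i₀ : ℕ) < n := (σf i₀).isLt
    have h2 : (σf i₀ : ℕ) ≠ n - 1 := by
      intro h
      exact hi₀jl (Fin.val_injective h)
    omega
  have hci₀ : c i₀ = ε := by
    have := hceq i₀
    rw [hRi₀, hSi₀, one_mul] at this
    exact this
  -- the product of all singular values is 1
  have hd1 := abs_det_eq_prod_svd (by omega) L s hs0 v w hv hw hsvd
  have hd2 := abs_det_monomial L σe c (fun i => (hcpos i).le) (fun i => hLE i)
  have hsprod : ∏ i, s i = 1 := by rw [← hd1, hd2, hprodc]
  -- all singular values are positive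
  have spos : ∀ i, 0 < s i := by
    intro i
    rcases lt_or_eq_of_le (hs0 i) with h | h
    · exact h
    · exfalso
      have hz : L (v i) = 0 := by rw [hsvd i, ← h, zero_smul]
      have hv0 : v i = 0 := L.injective (by rw [hz, map_zero])
      have := hv.1 i
      rw [hv0, norm_zero] at this
      exact zero_ne_one this
  -- the smallest singular value is at most ε
  haveI : Nonempty (Fin n) := ⟨⟨0, by omega⟩⟩
  set i0f : Fin n := ⟨0, by omega⟩ with hi0f
  have s0le : s i0f ≤ ε := by
    have cardeq : Fintype.card (Fin n) = Module.finrank ℝ (EuclideanSpace ℝ (Fin n)) := by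
      simp [finrank_euclideanSpace_fin]
    set Bv := basisOfOrthonormalOfCardEqFinrank hv cardeq with hBvdef
    have hBv : ⇑Bv = v := coe_basisOfOrthonormalOfCardEqFinrank hv cardeq
    set x : EuclideanSpace ℝ (Fin n) := EuclideanSpace.single i₀ (1:ℝ) with hx
    set t : Fin n → ℝ := fun i => Bv.repr x i with ht
    have hxdec : ∑ i, t i • v i = x := by
      have h := Bv.sum_repr x
      simp only [hBv] at h
      exact h
    have hLx : L x = ∑ i, (t i * s i) • w i := by
      rw [← hxdec, map_sum]
      refine Finset.sum_congr rfl fun i _ => ?_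
      rw [map_smul, hsvd i, smul_smul]
    have hinner1 : (inner ℝ x x : ℝ) = ∑ i, t i * t i := by
      rw [← hxdec, hv.inner_sum]
      simp
    have hinner2 : (inner ℝ (L x) (L x) : ℝ) = ∑ i, (t i * s i) * (t i * s i) := by
      rw [hLx, hw.inner_sum]
      simp
    have hxx : (inner ℝ x x : ℝ) = 1 := by
      rw [hx, EuclideanSpace.inner_single_left]
      simp [EuclideanSpace.single_apply]
    have hLxval : (inner ℝ (L x) (L x) : ℝ) = ε * ε := by
      rw [hx, hLE i₀, hci₀, real_inner_smul_left, real_inner_smul_right,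
        EuclideanSpace.inner_single_left]
      simp [EuclideanSpace.single_apply]
    have hsum1 : ∑ i, t i * t i = 1 := by rw [← hinner1, hxx]
    have hbound : (s i0f * s i0f) * 1 ≤ ε * ε := by
      rw [← hsum1, Finset.mul_sum, ← hLxval, hinner2]
      refine Finset.sum_le_sum fun i _ => ?_
      have hle : s i0f ≤ s i := hsmono (by simp [Fin.le_def, hi0f])
      nlinarith [mul_le_mul_of_nonneg_right (mul_self_le_mul_self (hs0 i0f) hle) (mul_self_nonneg (t i))]
    rw [mul_one] at hbound
    nlinarith [hs0 i0f, hε0]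
  -- conclusion
  have hfilter : Finset.univ.filter (fun j : Fin n => 1 ≤ (j : ℕ))
      = Finset.univ.erase i0f := by
    ext j
    simp only [Finset.mem_filter, Finset.mem_univ, true_and, Finset.mem_erase, and_true]
    constructor
    · intro h heq; rw [heq] at h; simp [hi0f] at h
    · intro h
      have : (j : ℕ) ≠ 0 := fun hz => h (Fin.ext (by simp [hi0f, hz]))
      omega
  have hmul : s i0f * ∏ j ∈ Finset.univ.erase i0f, s j = 1 := by
    rw [Finset.mul_prod_erase Finset.univ s (Finset.mem_univ i0f), hsprod]
  have hP : ∏ j ∈ Finset.univ.erase i0f, s j = (s i0f)⁻¹ :=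
    eq_inv_of_mul_eq_one_left (by rw [mul_comm] at hmul; exact hmul)
  rw [hfilter, hP]
  have h0 : 0 < s i0f := spos i0f
  rw [inv_le_inv₀ hε0 h0]
  exact s0le
end
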